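/- arXiv:1408.2179 — 2 statements merged into one kernel-verified Lean document; each statement's English description precedes it below -/
import Mathlib

section
/- Let s, t, α satisfy s² + t² = 1, t > 0, 0 < α ≤ 1, and s ≤ α/2 (so that the edge joining (1,0) and (αs,αt) is the longest edge of the triangle K with vertices (0,0), (1,0), (αs,αt)). Then 1/√(1−|s|) ≤ 2√2 · R_K, where R_K is the circumradius of K. -/
open MeasureTheory ENNReal Real

noncomputable section

/-- The plane `ℝ²` as a Euclidean space. -/
abbrev E2 : Type := EuclideanSpace ℝ (Fin 2)

/-- A point of `ℝ²` given by its two coordinates. -/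
noncomputable def pt (a b : ℝ) : E2 := WithLp.toLp 2 ![a, b]

/-- The partial derivative `∂f/∂xᵢ` of a function `f : ℝ² → ℝ`. -/
noncomputable def pderiv2 (i : Fin 2) (f : E2 → ℝ) : E2 → ℝ :=
  fun x => fderiv ℝ f x (EuclideanSpace.single i 1)

/-- The iterated partial derivative `∂^{a+b} f/(∂x₁^a ∂x₂^b)`. -/
noncomputable def pdxy (a b : ℕ) (f : E2 → ℝ) : E2 → ℝ :=
  (pderiv2 0)^[a] ((pderiv2 1)^[b] f)

/-- The Sobolev seminorm `|v|_{m,p,K}`: for finite `p` this is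
`(∑_{|δ|=m} ∫_K |∂^δ v|^p dx)^{1/p}` (the multi-indices `δ` of order `m` in two
variables are `(i, m-i)`, `i = 0,…,m`), and for `p = ∞` it is
`max_{|δ|=m} ess sup_K |∂^δ v|`. -/
noncomputable def sobSemi (m : ℕ) (p : ℝ≥0∞) (K : Set E2) (v : E2 → ℝ) : ℝ≥0∞ :=
  if p = ∞ then ⨆ i : Fin (m + 1), eLpNorm (pdxy i (m - i) v) ∞ (volume.restrict K)
  else (∑ i : Fin (m + 1),
      ∫⁻ x in K, ENNReal.ofReal |pdxy (i : ℕ) (m - (i : ℕ)) v x| ^ p.toReal ∂volume) ^ (1 / p.toReal)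

/-- Membership in the Sobolev space `W^{k,p}(K)` (smooth representative with all
seminorms up to order `k` finite). -/
def MemW (k : ℕ) (p : ℝ≥0∞) (K : Set E2) (v : E2 → ℝ) : Prop :=
  ContDiff ℝ k v ∧ ∀ m ≤ k, sobSemi m p K v ≠ ∞

/-- The (closed) triangle with vertices `x₁, x₂, x₃`. -/
def triSet (x₁ x₂ x₃ : E2) : Set E2 := convexHull ℝ {x₁, x₂, x₃}

/-- The set `Σ^k(K)` of Lagrange interpolation nodes of order `k` of the triangle
with vertices `x₁, x₂, x₃`: the points with barycentric coordinates `(a₁/k, a₂/k, a₃/k)`,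
`aᵢ ∈ ℕ`, `a₁+a₂+a₃ = k`. -/
def lagrangeNodes (k : ℕ) (x₁ x₂ x₃ : E2) : Set E2 :=
  {x | ∃ a : Fin 3 → ℕ, a 0 + a 1 + a 2 = k ∧
    x = ((a 0 : ℝ) / k) • x₁ + ((a 1 : ℝ) / k) • x₂ + ((a 2 : ℝ) / k) • x₃}

/-- `q : ℝ² → ℝ` is a polynomial of (total) degree at most `k`. -/
def IsPolyDeg (k : ℕ) (q : E2 → ℝ) : Prop :=
  ∃ P : MvPolynomial (Fin 2) ℝ, P.totalDegree ≤ k ∧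
    ∀ x : E2, q x = MvPolynomial.eval (fun i => x i) P

/-- The constant `B_p^{m,k}(K) = sup { |v|_{m,p,K}/|v|_{k+1,p,K} : v ∈ T_p^k(K) }`,
where `T_p^k(K)` is the set of `W^{k+1,p}(K)` functions vanishing at all Lagrange
nodes in `Σ^k(K)`. -/
noncomputable def Bconst (m k : ℕ) (p : ℝ≥0∞) (x₁ x₂ x₃ : E2) : ℝ≥0∞ :=
  ⨆ v : {v : E2 → ℝ // MemW (k + 1) p (triSet x₁ x₂ x₃) v ∧
      ∀ x ∈ lagrangeNodes k x₁ x₂ x₃, v x = 0},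
    sobSemi m p (triSet x₁ x₂ x₃) (v : E2 → ℝ) /
      sobSemi (k + 1) p (triSet x₁ x₂ x₃) (v : E2 → ℝ)

/-- The length `h_K` of the longest edge of the triangle with vertices `x₁, x₂, x₃`. -/
noncomputable def longestEdge (x₁ x₂ x₃ : E2) : ℝ :=
  max (dist x₁ x₂) (max (dist x₁ x₃) (dist x₂ x₃))

/-- The maximum interior angle of the triangle with vertices `x₁, x₂, x₃`. -/
noncomputable def maxAngle (x₁ x₂ x₃ : E2) : ℝ :=
  max (EuclideanGeometry.angle x₂ x₁ x₃)
    (max (EuclideanGeometry.angle x₁ x₂ x₃) (EuclideanGeometry.angle x₁ x₃ x₂))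

end
set_option maxHeartbeats 2000000 in
/-- Lemma 3.2 / `kobayashi`.  Let `s, t, α` satisfy `s² + t² = 1`,
`t > 0`, `0 < α ≤ 1` and `s ≤ α/2`, and let `R_K` be the circumradius of the
triangle `K` with vertices `(0,0)`, `(1,0)`, `(αs, αt)` (characterized by the
existence of a circumcenter `c` equidistant from the three vertices).  Then
`1/√(1-|s|) ≤ 2√2 · R_K`. -/
theorem one_div_sqrt_le_circumradius
    (s t α : ℝ) (hst : s ^ 2 + t ^ 2 = 1) (ht : 0 < t) (hα0 : 0 < α) (hα1 : α ≤ 1)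
    (hs : s ≤ α / 2)
    (R : ℝ) (c : E2)
    (hc1 : dist c (pt 0 0) = R) (hc2 : dist c (pt 1 0) = R)
    (hc3 : dist c (pt (α * s) (α * t)) = R) :
    1 / Real.sqrt (1 - |s|) ≤ 2 * Real.sqrt 2 * R := by
  have hRnn : 0 ≤ R := hc1 ▸ dist_nonneg
  -- coordinate equations
  have sq1 : (c 0 - 0) ^ 2 + (c 1 - 0) ^ 2 = R ^ 2 := by
    rw [← hc1, EuclideanSpace.dist_eq, Real.sq_sqrt (by positivity)]
    simp [pt, Fin.sum_univ_two, Real.dist_eq, sq_abs]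
  have sq2 : (c 0 - 1) ^ 2 + (c 1 - 0) ^ 2 = R ^ 2 := by
    rw [← hc2, EuclideanSpace.dist_eq, Real.sq_sqrt (by positivity)]
    simp [pt, Fin.sum_univ_two, Real.dist_eq, sq_abs]
  have sq3 : (c 0 - α * s) ^ 2 + (c 1 - α * t) ^ 2 = R ^ 2 := by
    rw [← hc3, EuclideanSpace.dist_eq, Real.sq_sqrt (by positivity)]
    simp [pt, Fin.sum_univ_two, Real.dist_eq, sq_abs]
  have hc0 : c 0 = 1 / 2 := by nlinarith [sq1, sq2]
  have haux : α ^ 2 * (s ^ 2 + t ^ 2) = α ^ 2 * 1 := by rw [hst]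
  rw [hc0] at sq1 sq3
  have hkeyc : α * (2 * c 1 * t) = α * (α - s) := by linear_combination sq1 - sq3 + haux
  have hc1' : 2 * c 1 * t = α - s := mul_left_cancel₀ hα0.ne' hkeyc
  have hR2 : 4 * t ^ 2 * R ^ 2 = t ^ 2 + (α - s) ^ 2 := by
    linear_combination (-4 * t ^ 2) * sq1 + (2 * c 1 * t + α - s) * hc1'
  have hs1 : s ^ 2 < 1 := by nlinarith
  have habs : |s| < 1 := abs_lt.2 ⟨by nlinarith [sq_nonneg (s + 1)], by nlinarith [sq_nonneg (s - 1)]⟩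
  have h1s : 0 < 1 - |s| := by linarith
  have ht2 : t ^ 2 = 1 - s ^ 2 := by linarith
  -- the main polynomial inequality
  have hpoly : 1 - s ^ 2 ≤ 2 * (1 - |s|) * ((1 - s ^ 2) + (α - s) ^ 2) := by
    rcases le_or_gt 0 s with h | h
    · rw [abs_of_nonneg h]
      have h2 : s * (1 + 4 * α) ≤ 1 + 2 * α ^ 2 := by nlinarith [mul_le_mul_of_nonneg_right hs (by positivity : (0:ℝ) ≤ 1 + 4 * α)]
      have hfac : (1 - s) * (1 + s) ≤ (1 - s) * (2 * (1 + α ^ 2 - 2 * α * s)) :=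
        mul_le_mul_of_nonneg_left (by linarith) (by linarith [abs_nonneg s, habs.le, le_abs_self s])
      nlinarith [hfac]
    · rw [abs_of_neg h]
      have hsm : -1 < s := by nlinarith [sq_nonneg (s + 1)]
      have h4 : 0 < α * (-s) := mul_pos hα0 (by linarith)
      have h2 : s * (4 * α - 1) ≤ 1 + 2 * α ^ 2 := by nlinarith [h4]
      have hfac : (1 + s) * (1 - s) ≤ (1 + s) * (2 * (1 + α ^ 2 - 2 * α * s)) :=
        mul_le_mul_of_nonneg_left (by linarith) (by linarith)
      nlinarith [hfac]
  have e : 2 * (1 - |s|) * ((1 - s ^ 2) + (α - s) ^ 2) = 2 * (1 - |s|) * (4 * t ^ 2 * R ^ 2) := by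
    rw [← ht2, ← hR2]
  have hkey : 1 / (1 - |s|) ≤ 8 * R ^ 2 := by
    rw [div_le_iff₀ h1s]
    have ht2pos : (0:ℝ) < t ^ 2 := by positivity
    have h' : t ^ 2 * 1 ≤ t ^ 2 * (8 * R ^ 2 * (1 - |s|)) := by nlinarith [hpoly, e, ht2]
    exact le_of_mul_le_mul_left h' ht2pos
  have hsqrt8 : Real.sqrt 8 = 2 * Real.sqrt 2 := by
    rw [show (8:ℝ) = 2 ^ 2 * 2 by norm_num, Real.sqrt_mul (by positivity),
      Real.sqrt_sq (by norm_num : (0:ℝ) ≤ 2)]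
  calc 1 / Real.sqrt (1 - |s|) = Real.sqrt (1 / (1 - |s|)) := by
        rw [one_div, one_div, Real.sqrt_inv]
    _ ≤ Real.sqrt (8 * R ^ 2) := Real.sqrt_le_sqrt hkey
    _ = 2 * Real.sqrt 2 * R := by
        rw [Real.sqrt_mul (by norm_num), Real.sqrt_sq hRnn, hsqrt8]
end

section
/- Let K be the triangle with vertices (0,0), (1,0), (αs, αt), where s² + t² = 1, t > 0, 0 < α ≤ 1, and the edge joining (1,0) and (αs,αt) is the longest edge of K. Then B_2^{1,1}(K) := sup_{v ∈ T_2^1(K)} |v|_{1,2,K}/|v|_{2,2,K} ≤ 4√2 · C_{1,2} · R_K, where R_K is the circumradius of K and C_{1,2} is any constant with B_2^{1,1}(K_α) ≤ C_{1,2} for every right triangle K_α with vertices (0,0), (1,0), (0,α), 0 < α ≤ 1. -/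
open MeasureTheory ENNReal Real

noncomputable section AuxProof

namespace AltProof

/-! ### The shear linear map -/

noncomputable def shearL (s t : ℝ) : E2 →ₗ[ℝ] E2 where
  toFun x := pt (x 0 + s * x 1) (t * x 1)
  map_add' x y := by ext i; fin_cases i <;> simp [pt] <;> ring
  map_smul' r x := by ext i; fin_cases i <;> simp [pt] <;> ring

noncomputable def shear (s t : ℝ) : E2 →L[ℝ] E2 := (shearL s t).toContinuousLinearMap

theorem shear_apply (s t : ℝ) (x : E2) : shear s t x = pt (x 0 + s * x 1) (t * x 1) := rfl

theorem shear_pt (s t a b : ℝ) : shear s t (pt a b) = pt (a + s * b) (t * b) := rfl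

theorem pt_eq_lincomb (a b : ℝ) :
    pt a b = a • (EuclideanSpace.single (0 : Fin 2) (1:ℝ))
      + b • (EuclideanSpace.single (1 : Fin 2) (1:ℝ)) := by
  ext i; fin_cases i <;> simp [pt, EuclideanSpace.single_apply]

theorem single0_eq_pt : (EuclideanSpace.single (0:Fin 2) (1:ℝ)) = pt 1 0 := by
  ext i; fin_cases i <;> simp [pt, EuclideanSpace.single_apply]

theorem single1_eq_pt : (EuclideanSpace.single (1:Fin 2) (1:ℝ)) = pt 0 1 := by
  ext i; fin_cases i <;> simp [pt, EuclideanSpace.single_apply]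

theorem shear_single0 (s t : ℝ) : shear s t (EuclideanSpace.single (0:Fin 2) (1:ℝ)) = pt 1 0 := by
  rw [shear_apply]; simp [EuclideanSpace.single_apply]

theorem shear_single1 (s t : ℝ) : shear s t (EuclideanSpace.single (1:Fin 2) (1:ℝ)) = pt s t := by
  rw [shear_apply]; simp [EuclideanSpace.single_apply]

theorem shearL_det (s t : ℝ) : LinearMap.det (shearL s t) = t := by
  rw [← LinearMap.det_toMatrix (EuclideanSpace.basisFun (Fin 2) ℝ).toBasis]
  have : (LinearMap.toMatrix (EuclideanSpace.basisFun (Fin 2) ℝ).toBasis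
      (EuclideanSpace.basisFun (Fin 2) ℝ).toBasis (shearL s t)) = !![1, s; 0, t] := by
    ext i j
    fin_cases i <;> fin_cases j <;>
      simp [LinearMap.toMatrix_apply, shearL, pt, EuclideanSpace.basisFun_apply]
  rw [this, Matrix.det_fin_two_of]; ring

theorem shear_injective {s t : ℝ} (ht : t ≠ 0) : Function.Injective (shear s t) := by
  intro a b h
  have h1 : t * a 1 = t * b 1 := congrArg (fun z : E2 => z 1) h
  have h1' : a 1 = b 1 := mul_left_cancel₀ ht h1
  have h0 : a 0 + s * a 1 = b 0 + s * b 1 := congrArg (fun z : E2 => z 0) h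
  have h0' : a 0 = b 0 := by rw [h1'] at h0; linarith
  ext i; fin_cases i <;> assumption

/-! ### Triangles -/

theorem triSet_compact (p1 p2 p3 : E2) : IsCompact (triSet p1 p2 p3) :=
  ((Set.finite_singleton p3).insert p2 |>.insert p1).isCompact_convexHull (𝕜 := ℝ)

theorem triSet_measurable (p1 p2 p3 : E2) : MeasurableSet (triSet p1 p2 p3) :=
  (triSet_compact p1 p2 p3).isClosed.measurableSet

theorem shear_image_triSet (s t : ℝ) (p1 p2 p3 : E2) :
    (shear s t) '' (triSet p1 p2 p3) = triSet (shear s t p1) (shear s t p2) (shear s t p3) := by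
  have hco : ⇑(shear s t) = ⇑(shearL s t) := rfl
  rw [triSet, triSet, hco, (shearL s t).image_convexHull]
  congr 1
  rw [Set.image_insert_eq, Set.image_insert_eq, Set.image_singleton]

/-! ### Change of variables -/

theorem cov {s t : ℝ} (ht : 0 < t) (p1 p2 p3 : E2) (g : E2 → ℝ≥0∞) :
    ∫⁻ y in triSet (shear s t p1) (shear s t p2) (shear s t p3), g y ∂volume
      = ENNReal.ofReal t * ∫⁻ x in triSet p1 p2 p3, g (shear s t x) ∂volume := by
  rw [← shear_image_triSet]
  rw [lintegral_image_eq_lintegral_abs_det_fderiv_mul volume (triSet_measurable p1 p2 p3)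
    (fun x _ => (shear s t).hasFDerivAt.hasFDerivWithinAt)
    ((shear_injective ht.ne').injOn) g]
  have hdet : (shear s t).det = t := shearL_det s t
  rw [hdet, abs_of_pos ht, ← lintegral_const_mul']
  exact ENNReal.ofReal_ne_top

theorem cov' {s t : ℝ} (ht : 0 < t) (p1 p2 p3 : E2) (g : E2 → ℝ≥0∞) :
    ∫⁻ x in triSet p1 p2 p3, g (shear s t x) ∂volume
      = ENNReal.ofReal t⁻¹ *
        ∫⁻ y in triSet (shear s t p1) (shear s t p2) (shear s t p3), g y ∂volume := by
  rw [cov ht p1 p2 p3 g, ← mul_assoc, ← ENNReal.ofReal_mul (by positivity)]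
  rw [inv_mul_cancel₀ ht.ne', ENNReal.ofReal_one, one_mul]

/-! ### Derivatives -/

theorem contDiff_pderiv2 {n : ℕ} {f : E2 → ℝ} (hf : ContDiff ℝ (n + 1) f) (i : Fin 2) :
    ContDiff ℝ n (pderiv2 i f) := by
  have h1 : ContDiff ℝ n (fderiv ℝ f) := by
    apply hf.fderiv_right
    norm_cast
  exact (ContinuousLinearMap.apply ℝ ℝ (EuclideanSpace.single i 1)).contDiff.comp h1

theorem pderiv2_comp_clm {f : E2 → ℝ} (hf : Differentiable ℝ f) (L : E2 →L[ℝ] E2) (i : Fin 2) :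
    pderiv2 i (fun x => f (L x)) = fun x => fderiv ℝ f (L x) (L (EuclideanSpace.single i 1)) := by
  funext x
  unfold pderiv2
  have : fderiv ℝ (fun x => f (L x)) x = (fderiv ℝ f (L x)).comp (L : E2 →L[ℝ] E2) := by
    rw [show (fun x => f (L x)) = f ∘ L from rfl,
      fderiv_comp x (hf (L x)) L.differentiableAt, L.fderiv]
  rw [this]; rfl

theorem pderiv2_add_smul {f g : E2 → ℝ} (hf : Differentiable ℝ f) (hg : Differentiable ℝ g)
    (a b : ℝ) (i : Fin 2) :
    pderiv2 i (fun x => a * f x + b * g x) =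
      fun x => a * pderiv2 i f x + b * pderiv2 i g x := by
  funext x
  unfold pderiv2
  rw [fderiv_fun_add ((hf x).const_mul a) ((hg x).const_mul b), fderiv_const_mul (hf x),
    fderiv_const_mul (hg x)]
  simp

theorem pderiv2_comm {f : E2 → ℝ} (hf : ContDiff ℝ 2 f) (i j : Fin 2) :
    pderiv2 i (pderiv2 j f) = pderiv2 j (pderiv2 i f) := by
  funext x
  have hd1 : Differentiable ℝ (fderiv ℝ f) := by
    have : ContDiff ℝ 1 (fderiv ℝ f) := hf.fderiv_right (by norm_cast)
    exact this.differentiable (by norm_num)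
  have key : ∀ v w : E2, fderiv ℝ (fderiv ℝ f) x v w = fderiv ℝ (fderiv ℝ f) x w v := by
    intro v w
    exact second_derivative_symmetric (fun y => (hf.differentiable two_ne_zero y).hasFDerivAt)
      (hd1 x).hasFDerivAt v w
  have hrepr : ∀ k l : Fin 2, pderiv2 k (pderiv2 l f) x
      = fderiv ℝ (fderiv ℝ f) x (EuclideanSpace.single k 1) (EuclideanSpace.single l 1) := by
    intro k l
    unfold pderiv2
    rw [show (fun y => fderiv ℝ f y (EuclideanSpace.single l 1))
        = (ContinuousLinearMap.apply ℝ ℝ (EuclideanSpace.single l 1)) ∘ (fderiv ℝ f) from rfl,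
      fderiv_comp x (ContinuousLinearMap.apply ℝ ℝ (EuclideanSpace.single l 1)).differentiableAt
        (hd1 x)]
    simp
  rw [hrepr, hrepr, key]

section Identities
variable {s t : ℝ} {v : E2 → ℝ}

theorem D0comp {u : E2 → ℝ} (hu : Differentiable ℝ u) :
    pderiv2 0 (fun x => u (shear s t x)) = fun x => pderiv2 0 u (shear s t x) := by
  rw [pderiv2_comp_clm hu (shear s t) 0, shear_single0]
  funext x
  simp [pderiv2, single0_eq_pt]

theorem D1comp {u : E2 → ℝ} (hu : Differentiable ℝ u) :
    pderiv2 1 (fun x => u (shear s t x)) =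
      fun x => s * pderiv2 0 u (shear s t x) + t * pderiv2 1 u (shear s t x) := by
  rw [pderiv2_comp_clm hu (shear s t) 1, shear_single1]
  funext x
  rw [pt_eq_lincomb]
  simp [pderiv2]

theorem I10 (hv : ContDiff ℝ 2 v) :
    pdxy 1 0 (fun x => v (shear s t x)) = fun x => pdxy 1 0 v (shear s t x) := by
  have h := D0comp (s := s) (t := t) (hv.differentiable two_ne_zero)
  simp only [pdxy, Function.iterate_one, Function.iterate_zero, id_eq]
  exact h

theorem I01 (hv : ContDiff ℝ 2 v) :
    pdxy 0 1 (fun x => v (shear s t x)) =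
      fun x => s * pdxy 1 0 v (shear s t x) + t * pdxy 0 1 v (shear s t x) := by
  have h := D1comp (s := s) (t := t) (hv.differentiable two_ne_zero)
  simp only [pdxy, Function.iterate_one, Function.iterate_zero, id_eq]
  exact h

theorem I20 (hv : ContDiff ℝ 2 v) :
    pdxy 2 0 (fun x => v (shear s t x)) = fun x => pdxy 2 0 v (shear s t x) := by
  have h0 : Differentiable ℝ (pderiv2 0 v) := (contDiff_pderiv2 (n := 1) hv 0).differentiable (by norm_num)
  show pderiv2 0 (pderiv2 0 (fun x => v (shear s t x))) = _
  have h10 : pderiv2 0 (fun x => v (shear s t x)) = fun x => pderiv2 0 v (shear s t x) :=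
    D0comp (hv.differentiable two_ne_zero)
  rw [h10, D0comp h0]
  rfl

theorem I11 (hv : ContDiff ℝ 2 v) :
    pdxy 1 1 (fun x => v (shear s t x)) =
      fun x => s * pdxy 2 0 v (shear s t x) + t * pdxy 1 1 v (shear s t x) := by
  have h0 : Differentiable ℝ (pderiv2 0 v) := (contDiff_pderiv2 (n := 1) hv 0).differentiable (by norm_num)
  have h1 : Differentiable ℝ (pderiv2 1 v) := (contDiff_pderiv2 (n := 1) hv 1).differentiable (by norm_num)
  show pderiv2 0 (pderiv2 1 (fun x => v (shear s t x))) = _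
  have h01 : pderiv2 1 (fun x => v (shear s t x)) =
      fun x => s * pderiv2 0 v (shear s t x) + t * pderiv2 1 v (shear s t x) :=
    D1comp (hv.differentiable two_ne_zero)
  have hf : Differentiable ℝ (fun x => pderiv2 0 v (shear s t x)) :=
    h0.comp (shear s t).differentiable
  have hg : Differentiable ℝ (fun x => pderiv2 1 v (shear s t x)) :=
    h1.comp (shear s t).differentiable
  rw [h01, pderiv2_add_smul hf hg s t 0, D0comp h0, D0comp h1]
  rfl

theorem I02 (hv : ContDiff ℝ 2 v) :
    pdxy 0 2 (fun x => v (shear s t x)) =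
      fun x => s ^ 2 * pdxy 2 0 v (shear s t x) + 2 * s * t * pdxy 1 1 v (shear s t x)
        + t ^ 2 * pdxy 0 2 v (shear s t x) := by
  have h0 : Differentiable ℝ (pderiv2 0 v) := (contDiff_pderiv2 (n := 1) hv 0).differentiable (by norm_num)
  have h1 : Differentiable ℝ (pderiv2 1 v) := (contDiff_pderiv2 (n := 1) hv 1).differentiable (by norm_num)
  show pderiv2 1 (pderiv2 1 (fun x => v (shear s t x))) = _
  have h01 : pderiv2 1 (fun x => v (shear s t x)) =
      fun x => s * pderiv2 0 v (shear s t x) + t * pderiv2 1 v (shear s t x) :=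
    D1comp (hv.differentiable two_ne_zero)
  have hf : Differentiable ℝ (fun x => pderiv2 0 v (shear s t x)) :=
    h0.comp (shear s t).differentiable
  have hg : Differentiable ℝ (fun x => pderiv2 1 v (shear s t x)) :=
    h1.comp (shear s t).differentiable
  rw [h01, pderiv2_add_smul hf hg s t 1, D1comp h0, D1comp h1]
  funext x
  have hcomm : pderiv2 1 (pderiv2 0 v) = pderiv2 0 (pderiv2 1 v) := pderiv2_comm hv 1 0
  rw [hcomm]
  show s * (s * pderiv2 0 (pderiv2 0 v) _ + t * pderiv2 0 (pderiv2 1 v) _)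
      + t * (s * pderiv2 0 (pderiv2 1 v) _ + t * pderiv2 1 (pderiv2 1 v) _) = _
  show _ = s ^ 2 * pderiv2 0 (pderiv2 0 v) (shear s t x)
      + 2 * s * t * pderiv2 0 (pderiv2 1 v) (shear s t x)
      + t ^ 2 * pderiv2 1 (pderiv2 1 v) (shear s t x)
  ring

end Identities

/-! ### Sobolev seminorm expansions -/

theorem osq (r : ℝ) : ENNReal.ofReal |r| ^ (2:ℝ) = ENNReal.ofReal (r ^ 2) := by
  rw [ENNReal.ofReal_rpow_of_nonneg (abs_nonneg r) (by norm_num)]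
  congr 1
  rw [show ((2:ℝ)) = ((2:ℕ):ℝ) by norm_num, Real.rpow_natCast, sq_abs]

theorem osq' (r : ℝ) : ENNReal.ofReal |r| ^ (2:ℕ) = ENNReal.ofReal (r ^ 2) := by
  rw [pow_two, ← ENNReal.ofReal_mul (abs_nonneg r), abs_mul_abs_self, ← pow_two]

theorem sob0_eq (K : Set E2) (f : E2 → ℝ) :
    sobSemi 0 2 K f = (∫⁻ x in K, ENNReal.ofReal (f x ^ 2) ∂volume) ^ ((1:ℝ)/2) := by
  rw [sobSemi, if_neg (by norm_num : (2:ℝ≥0∞) ≠ ∞)]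
  norm_num [Fin.sum_univ_one, osq, osq']
  rfl

theorem sob1_eq (K : Set E2) (f : E2 → ℝ) :
    sobSemi 1 2 K f = (∫⁻ x in K, ENNReal.ofReal (pdxy 0 1 f x ^ 2) ∂volume
      + ∫⁻ x in K, ENNReal.ofReal (pdxy 1 0 f x ^ 2) ∂volume) ^ ((1:ℝ)/2) := by
  rw [sobSemi, if_neg (by norm_num : (2:ℝ≥0∞) ≠ ∞)]
  rw [Fin.sum_univ_two]
  norm_num [osq, osq']

theorem sob2_eq (K : Set E2) (f : E2 → ℝ) :
    sobSemi 2 2 K f = (∫⁻ x in K, ENNReal.ofReal (pdxy 0 2 f x ^ 2) ∂volume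
      + ∫⁻ x in K, ENNReal.ofReal (pdxy 1 1 f x ^ 2) ∂volume
      + ∫⁻ x in K, ENNReal.ofReal (pdxy 2 0 f x ^ 2) ∂volume) ^ ((1:ℝ)/2) := by
  rw [sobSemi, if_neg (by norm_num : (2:ℝ≥0∞) ≠ ∞)]
  rw [Fin.sum_univ_three]
  norm_num [osq, osq', add_assoc]

/-! ### Finiteness -/

theorem lint_sq_ne_top {f : E2 → ℝ} (hf : Continuous f) {K : Set E2} (hK : IsCompact K)
    (hKm : MeasurableSet K) :
    ∫⁻ x in K, ENNReal.ofReal (f x ^ 2) ∂volume ≠ ∞ := by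
  obtain ⟨M, hM⟩ := hK.exists_bound_of_continuousOn hf.continuousOn
  have hb : ∀ᵐ x ∂(volume.restrict K), ENNReal.ofReal (f x ^ 2) ≤ ENNReal.ofReal (M ^ 2) := by
    refine ae_restrict_of_forall_mem hKm ?_
    intro x hx
    apply ENNReal.ofReal_le_ofReal
    have := hM x hx
    have h0 : |f x| ≤ M := by rwa [Real.norm_eq_abs] at this
    nlinarith [abs_nonneg (f x), sq_abs (f x)]
  have := lintegral_mono_ae hb
  refine ne_top_of_le_ne_top ?_ this
  rw [lintegral_const, Measure.restrict_apply_univ]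
  exact ENNReal.mul_ne_top ENNReal.ofReal_ne_top hK.measure_lt_top.ne

theorem cont_pdxy2 {f : E2 → ℝ} (hf : ContDiff ℝ 2 f) :
    Continuous (pdxy 0 1 f) ∧ Continuous (pdxy 1 0 f) ∧
    Continuous (pdxy 0 2 f) ∧ Continuous (pdxy 1 1 f) ∧ Continuous (pdxy 2 0 f) := by
  have h0 : ContDiff ℝ 1 (pderiv2 0 f) := contDiff_pderiv2 (n := 1) hf 0
  have h1 : ContDiff ℝ 1 (pderiv2 1 f) := contDiff_pderiv2 (n := 1) hf 1
  refine ⟨?_, ?_, ?_, ?_, ?_⟩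
  · exact h1.continuous
  · exact h0.continuous
  · exact (contDiff_pderiv2 (n := 0) h1 1).continuous
  · exact (contDiff_pderiv2 (n := 0) h1 0).continuous
  · exact (contDiff_pderiv2 (n := 0) h0 0).continuous

theorem memW_of_contDiff {f : E2 → ℝ} (hf : ContDiff ℝ 2 f) (p1 p2 p3 : E2) :
    MemW 2 2 (triSet p1 p2 p3) f := by
  obtain ⟨c01, c10, c02, c11, c20⟩ := cont_pdxy2 hf
  have hK := triSet_compact p1 p2 p3
  have hKm := triSet_measurable p1 p2 p3
  refine ⟨hf, ?_⟩
  intro m hm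
  interval_cases m
  · rw [sob0_eq]
    exact ENNReal.rpow_ne_top_of_nonneg (by norm_num)
      (lint_sq_ne_top hf.continuous hK hKm)
  · rw [sob1_eq]
    exact ENNReal.rpow_ne_top_of_nonneg (by norm_num) (by
      simp only [ne_eq, ENNReal.add_eq_top, not_or]
      exact ⟨lint_sq_ne_top c01 hK hKm, lint_sq_ne_top c10 hK hKm⟩)
  · rw [sob2_eq]
    exact ENNReal.rpow_ne_top_of_nonneg (by norm_num) (by
      simp only [ne_eq, ENNReal.add_eq_top, not_or]
      exact ⟨⟨lint_sq_ne_top c02 hK hKm, lint_sq_ne_top c11 hK hKm⟩,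
        lint_sq_ne_top c20 hK hKm⟩)

/-! ### Lagrange nodes of order 1 -/

theorem lagrangeNodes_one (x₁ x₂ x₃ : E2) :
    lagrangeNodes 1 x₁ x₂ x₃ = {x₁, x₂, x₃} := by
  ext x
  constructor
  · rintro ⟨a, hsum, rfl⟩
    have h : (a 0 = 1 ∧ a 1 = 0 ∧ a 2 = 0) ∨ (a 0 = 0 ∧ a 1 = 1 ∧ a 2 = 0) ∨
        (a 0 = 0 ∧ a 1 = 0 ∧ a 2 = 1) := by omega
    rcases h with ⟨h0, h1, h2⟩ | ⟨h0, h1, h2⟩ | ⟨h0, h1, h2⟩ <;>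
      simp [h0, h1, h2, Set.mem_insert_iff]
  · intro hx
    rcases hx with rfl | rfl | rfl
    · exact ⟨![1, 0, 0], by simp, by simp⟩
    · exact ⟨![0, 1, 0], by simp, by simp⟩
    · exact ⟨![0, 0, 1], by simp, by simp⟩

/-! ### Pointwise inequalities -/

theorem ptwise1 {s t : ℝ} (hst : s ^ 2 + t ^ 2 = 1) (ht : 0 < t) (A B : ℝ) :
    B ^ 2 + A ^ 2 ≤ (2 / t ^ 2) * ((s * A + t * B) ^ 2 + A ^ 2) := by
  rw [div_mul_eq_mul_div, le_div_iff₀ (by positivity)]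
  have hident : 2 * ((s * A + t * B) ^ 2 + A ^ 2) - (B ^ 2 + A ^ 2) * t ^ 2
      = (2 * s * A + t * B) ^ 2 + t ^ 2 * A ^ 2
        + 2 * A ^ 2 * (1 - s ^ 2 - t ^ 2) := by ring
  have h0 : 1 - s ^ 2 - t ^ 2 = 0 := by linarith
  rw [h0, mul_zero] at hident
  nlinarith [sq_nonneg (2 * s * A + t * B), mul_nonneg (sq_nonneg t) (sq_nonneg A),
    mul_nonneg (sq_nonneg t) (sq_nonneg B)]

theorem ptwise2 {s t : ℝ} (hst : s ^ 2 + t ^ 2 = 1) (X Y Z : ℝ) :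
    X ^ 2 + (s * X + t * Y) ^ 2 + (s ^ 2 * X + 2 * s * t * Y + t ^ 2 * Z) ^ 2
      ≤ 4 * (Z ^ 2 + Y ^ 2 + X ^ 2) := by
  have hsq : (s ^ 2 + t ^ 2) ^ 2 = 1 := by rw [hst]; norm_num
  have h1 : (s * X + t * Y) ^ 2 ≤ X ^ 2 + Y ^ 2 := by
    nlinarith [sq_nonneg (t * X - s * Y), sq_nonneg X, sq_nonneg Y]
  have h2 : (s ^ 2 * X + 2 * s * t * Y + t ^ 2 * Z) ^ 2
      ≤ (1 + 2 * s ^ 2 * t ^ 2) * (X ^ 2 + Y ^ 2 + Z ^ 2) := by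
    nlinarith [sq_nonneg (s ^ 2 * Y - 2 * s * t * X), sq_nonneg (s ^ 2 * Z - t ^ 2 * X),
      sq_nonneg (2 * s * t * Z - t ^ 2 * Y), sq_nonneg X, sq_nonneg Y, sq_nonneg Z, hsq]
  have h3 : s ^ 2 * t ^ 2 ≤ 1 / 4 := by nlinarith [sq_nonneg (s ^ 2 - t ^ 2)]
  have hS : (0:ℝ) ≤ X ^ 2 + Y ^ 2 + Z ^ 2 := by positivity
  nlinarith [h1, h2, h3, hS, sq_nonneg X, sq_nonneg Y, sq_nonneg Z]

/-! ### Vertices under shear -/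

theorem pt_congr {a b a' b' : ℝ} (h1 : a = a') (h2 : b = b') : pt a b = pt a' b' := by
  rw [h1, h2]

theorem shear_v1 (s t : ℝ) : shear s t (pt 0 0) = pt 0 0 := by
  rw [shear_pt]; exact pt_congr (by ring) (by ring)

theorem shear_v2 (s t : ℝ) : shear s t (pt 1 0) = pt 1 0 := by
  rw [shear_pt]; exact pt_congr (by ring) (by ring)

theorem shear_v3 (s t α : ℝ) : shear s t (pt 0 α) = pt (α * s) (α * t) := by
  rw [shear_pt]; exact pt_congr (by ring) (by ring)

theorem Ktri (s t α : ℝ) :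
    triSet (pt 0 0) (pt 1 0) (pt (α * s) (α * t)) =
      triSet (shear s t (pt 0 0)) (shear s t (pt 1 0)) (shear s t (pt 0 α)) := by
  rw [shear_v1, shear_v2, shear_v3]

theorem meas_osq {u : E2 → ℝ} (hu : Continuous u) :
    Measurable fun x => ENNReal.ofReal (u x ^ 2) :=
  ENNReal.measurable_ofReal.comp (hu.pow 2).measurable

/-! ### The two seminorm comparison lemmas -/

theorem comp1 {s t α : ℝ} (hst : s ^ 2 + t ^ 2 = 1) (ht : 0 < t)
    {v : E2 → ℝ} (hv : ContDiff ℝ 2 v) :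
    sobSemi 1 2 (triSet (pt 0 0) (pt 1 0) (pt (α * s) (α * t))) v
      ≤ ENNReal.ofReal (Real.sqrt (2 / t)) *
        sobSemi 1 2 (triSet (pt 0 0) (pt 1 0) (pt 0 α)) (fun x => v (shear s t x)) := by
  obtain ⟨c01v, c10v, _, _, _⟩ := cont_pdxy2 hv
  rw [sob1_eq, sob1_eq]
  have hm1 : Measurable (fun x => ENNReal.ofReal (pdxy 0 1 v x ^ 2)) := meas_osq c01v
  have key : (∫⁻ x in triSet (pt 0 0) (pt 1 0) (pt (α * s) (α * t)),
        ENNReal.ofReal (pdxy 0 1 v x ^ 2) ∂volume)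
      + (∫⁻ x in triSet (pt 0 0) (pt 1 0) (pt (α * s) (α * t)),
        ENNReal.ofReal (pdxy 1 0 v x ^ 2) ∂volume)
      = ∫⁻ x in triSet (pt 0 0) (pt 1 0) (pt (α * s) (α * t)),
        (fun y => ENNReal.ofReal (pdxy 0 1 v y ^ 2) + ENNReal.ofReal (pdxy 1 0 v y ^ 2)) x
          ∂volume := (lintegral_add_left hm1 _).symm
  rw [key, Ktri s t α, cov ht]
  have hpt : ∀ x : E2,
      (fun y => ENNReal.ofReal (pdxy 0 1 v y ^ 2) + ENNReal.ofReal (pdxy 1 0 v y ^ 2))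
          (shear s t x)
        ≤ ENNReal.ofReal (2 / t ^ 2) *
          (ENNReal.ofReal (pdxy 0 1 (fun x => v (shear s t x)) x ^ 2)
            + ENNReal.ofReal (pdxy 1 0 (fun x => v (shear s t x)) x ^ 2)) := by
    intro x
    rw [I01 hv, I10 hv]
    simp only
    rw [← ENNReal.ofReal_add (by positivity) (by positivity),
      ← ENNReal.ofReal_add (by positivity) (by positivity),
      ← ENNReal.ofReal_mul (by positivity)]
    exact ENNReal.ofReal_le_ofReal (ptwise1 hst ht _ _)
  have step1 : ENNReal.ofReal t * ∫⁻ x in triSet (pt 0 0) (pt 1 0) (pt 0 α),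
        (fun y => ENNReal.ofReal (pdxy 0 1 v y ^ 2) + ENNReal.ofReal (pdxy 1 0 v y ^ 2))
          (shear s t x) ∂volume
      ≤ ENNReal.ofReal (2 / t) *
        ((∫⁻ x in triSet (pt 0 0) (pt 1 0) (pt 0 α),
          ENNReal.ofReal (pdxy 0 1 (fun x => v (shear s t x)) x ^ 2) ∂volume)
        + ∫⁻ x in triSet (pt 0 0) (pt 1 0) (pt 0 α),
          ENNReal.ofReal (pdxy 1 0 (fun x => v (shear s t x)) x ^ 2) ∂volume) := by
    have hm2 : Measurable (fun x => ENNReal.ofReal (pdxy 0 1 (fun x => v (shear s t x)) x ^ 2)) :=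
      meas_osq (cont_pdxy2 (hv.comp (shear s t).contDiff)).1
    calc ENNReal.ofReal t * ∫⁻ x in triSet (pt 0 0) (pt 1 0) (pt 0 α),
          (fun y => ENNReal.ofReal (pdxy 0 1 v y ^ 2) + ENNReal.ofReal (pdxy 1 0 v y ^ 2))
            (shear s t x) ∂volume
        ≤ ENNReal.ofReal t * ∫⁻ x in triSet (pt 0 0) (pt 1 0) (pt 0 α),
          ENNReal.ofReal (2 / t ^ 2) *
            (ENNReal.ofReal (pdxy 0 1 (fun x => v (shear s t x)) x ^ 2)
              + ENNReal.ofReal (pdxy 1 0 (fun x => v (shear s t x)) x ^ 2)) ∂volume := by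
          exact mul_le_mul_right (lintegral_mono hpt) _
      _ = ENNReal.ofReal t * (ENNReal.ofReal (2 / t ^ 2) *
            ∫⁻ x in triSet (pt 0 0) (pt 1 0) (pt 0 α),
            (ENNReal.ofReal (pdxy 0 1 (fun x => v (shear s t x)) x ^ 2)
              + ENNReal.ofReal (pdxy 1 0 (fun x => v (shear s t x)) x ^ 2)) ∂volume) := by
          rw [lintegral_const_mul' _ _ ENNReal.ofReal_ne_top]
      _ = ENNReal.ofReal (2 / t) *
            ∫⁻ x in triSet (pt 0 0) (pt 1 0) (pt 0 α),
            (ENNReal.ofReal (pdxy 0 1 (fun x => v (shear s t x)) x ^ 2)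
              + ENNReal.ofReal (pdxy 1 0 (fun x => v (shear s t x)) x ^ 2)) ∂volume := by
          rw [← mul_assoc, ← ENNReal.ofReal_mul ht.le]
          congr 2
          field_simp
      _ = ENNReal.ofReal (2 / t) *
          ((∫⁻ x in triSet (pt 0 0) (pt 1 0) (pt 0 α),
            ENNReal.ofReal (pdxy 0 1 (fun x => v (shear s t x)) x ^ 2) ∂volume)
          + ∫⁻ x in triSet (pt 0 0) (pt 1 0) (pt 0 α),
            ENNReal.ofReal (pdxy 1 0 (fun x => v (shear s t x)) x ^ 2) ∂volume) := by
          rw [lintegral_add_left hm2]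
  calc (ENNReal.ofReal t * ∫⁻ x in triSet (pt 0 0) (pt 1 0) (pt 0 α),
        (fun y => ENNReal.ofReal (pdxy 0 1 v y ^ 2) + ENNReal.ofReal (pdxy 1 0 v y ^ 2))
          (shear s t x) ∂volume) ^ ((1:ℝ)/2)
      ≤ (ENNReal.ofReal (2 / t) *
        ((∫⁻ x in triSet (pt 0 0) (pt 1 0) (pt 0 α),
          ENNReal.ofReal (pdxy 0 1 (fun x => v (shear s t x)) x ^ 2) ∂volume)
        + ∫⁻ x in triSet (pt 0 0) (pt 1 0) (pt 0 α),
          ENNReal.ofReal (pdxy 1 0 (fun x => v (shear s t x)) x ^ 2) ∂volume)) ^ ((1:ℝ)/2) :=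
        ENNReal.rpow_le_rpow step1 (by norm_num)
    _ = ENNReal.ofReal (Real.sqrt (2 / t)) *
        ((∫⁻ x in triSet (pt 0 0) (pt 1 0) (pt 0 α),
          ENNReal.ofReal (pdxy 0 1 (fun x => v (shear s t x)) x ^ 2) ∂volume)
        + ∫⁻ x in triSet (pt 0 0) (pt 1 0) (pt 0 α),
          ENNReal.ofReal (pdxy 1 0 (fun x => v (shear s t x)) x ^ 2) ∂volume) ^ ((1:ℝ)/2) := by
        rw [ENNReal.mul_rpow_of_nonneg _ _ (by norm_num),
          ENNReal.ofReal_rpow_of_nonneg (by positivity) (by norm_num)]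
        congr 2
        rw [Real.sqrt_eq_rpow]

theorem comp2 {s t α : ℝ} (hst : s ^ 2 + t ^ 2 = 1) (ht : 0 < t)
    {v : E2 → ℝ} (hv : ContDiff ℝ 2 v) :
    sobSemi 2 2 (triSet (pt 0 0) (pt 1 0) (pt 0 α)) (fun x => v (shear s t x))
      ≤ ENNReal.ofReal (Real.sqrt (4 / t)) *
        sobSemi 2 2 (triSet (pt 0 0) (pt 1 0) (pt (α * s) (α * t))) v := by
  obtain ⟨_, _, c02v, c11v, c20v⟩ := cont_pdxy2 hv
  have hw : ContDiff ℝ 2 (fun x => v (shear s t x)) := hv.comp (shear s t).contDiff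
  obtain ⟨_, _, c02w, c11w, c20w⟩ := cont_pdxy2 hw
  rw [sob2_eq, sob2_eq]
  set X := pdxy 2 0 v with hX
  set Y := pdxy 1 1 v with hY
  set Z := pdxy 0 2 v with hZ
  set F : E2 → ℝ≥0∞ := fun y =>
    ENNReal.ofReal ((s ^ 2 * X y + 2 * s * t * Y y + t ^ 2 * Z y) ^ 2)
      + ENNReal.ofReal ((s * X y + t * Y y) ^ 2) + ENNReal.ofReal (X y ^ 2) with hF
  have key : (∫⁻ x in triSet (pt 0 0) (pt 1 0) (pt 0 α),
        ENNReal.ofReal (pdxy 0 2 (fun x => v (shear s t x)) x ^ 2) ∂volume)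
      + (∫⁻ x in triSet (pt 0 0) (pt 1 0) (pt 0 α),
        ENNReal.ofReal (pdxy 1 1 (fun x => v (shear s t x)) x ^ 2) ∂volume)
      + (∫⁻ x in triSet (pt 0 0) (pt 1 0) (pt 0 α),
        ENNReal.ofReal (pdxy 2 0 (fun x => v (shear s t x)) x ^ 2) ∂volume)
      = ∫⁻ x in triSet (pt 0 0) (pt 1 0) (pt 0 α), F (shear s t x) ∂volume := by
    rw [← lintegral_add_left (meas_osq c02w),
      ← lintegral_add_left ((meas_osq c02w).fun_add (meas_osq c11w))]
    congr 1
    funext x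
    rw [I02 hv, I11 hv, I20 hv, hF]
  rw [key, cov' ht, ← Ktri s t α]
  have hpt : ∀ y : E2, F y ≤ ENNReal.ofReal 4 *
      (ENNReal.ofReal (Z y ^ 2) + ENNReal.ofReal (Y y ^ 2) + ENNReal.ofReal (X y ^ 2)) := by
    intro y
    rw [hF]
    simp only
    rw [← ENNReal.ofReal_add (by positivity) (by positivity),
      ← ENNReal.ofReal_add (by positivity) (by positivity),
      ← ENNReal.ofReal_add (by positivity) (by positivity),
      ← ENNReal.ofReal_add (by positivity) (by positivity),
      ← ENNReal.ofReal_mul (by positivity)]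
    apply ENNReal.ofReal_le_ofReal
    have h := ptwise2 hst (X y) (Y y) (Z y)
    linarith
  have step1 : ENNReal.ofReal t⁻¹ *
        ∫⁻ y in triSet (pt 0 0) (pt 1 0) (pt (α * s) (α * t)), F y ∂volume
      ≤ ENNReal.ofReal (4 / t) *
        ((∫⁻ x in triSet (pt 0 0) (pt 1 0) (pt (α * s) (α * t)),
          ENNReal.ofReal (Z x ^ 2) ∂volume)
        + (∫⁻ x in triSet (pt 0 0) (pt 1 0) (pt (α * s) (α * t)),
          ENNReal.ofReal (Y x ^ 2) ∂volume)
        + ∫⁻ x in triSet (pt 0 0) (pt 1 0) (pt (α * s) (α * t)),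
          ENNReal.ofReal (X x ^ 2) ∂volume) := by
    calc ENNReal.ofReal t⁻¹ *
          ∫⁻ y in triSet (pt 0 0) (pt 1 0) (pt (α * s) (α * t)), F y ∂volume
        ≤ ENNReal.ofReal t⁻¹ *
          ∫⁻ y in triSet (pt 0 0) (pt 1 0) (pt (α * s) (α * t)), ENNReal.ofReal 4 *
            (ENNReal.ofReal (Z y ^ 2) + ENNReal.ofReal (Y y ^ 2) + ENNReal.ofReal (X y ^ 2))
            ∂volume := mul_le_mul_right (lintegral_mono hpt) _
      _ = ENNReal.ofReal (4 / t) *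
          ∫⁻ y in triSet (pt 0 0) (pt 1 0) (pt (α * s) (α * t)),
            (ENNReal.ofReal (Z y ^ 2) + ENNReal.ofReal (Y y ^ 2) + ENNReal.ofReal (X y ^ 2))
            ∂volume := by
          rw [lintegral_const_mul' _ _ ENNReal.ofReal_ne_top, ← mul_assoc,
            ← ENNReal.ofReal_mul (by positivity)]
          congr 2
          rw [eq_comm, div_eq_iff ht.ne']
          field_simp
      _ = ENNReal.ofReal (4 / t) *
          ((∫⁻ x in triSet (pt 0 0) (pt 1 0) (pt (α * s) (α * t)),
            ENNReal.ofReal (Z x ^ 2) ∂volume)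
          + (∫⁻ x in triSet (pt 0 0) (pt 1 0) (pt (α * s) (α * t)),
            ENNReal.ofReal (Y x ^ 2) ∂volume)
          + ∫⁻ x in triSet (pt 0 0) (pt 1 0) (pt (α * s) (α * t)),
            ENNReal.ofReal (X x ^ 2) ∂volume) := by
          rw [← lintegral_add_left (meas_osq c02v),
            ← lintegral_add_left ((meas_osq c02v).fun_add (meas_osq c11v))]
  calc (ENNReal.ofReal t⁻¹ *
        ∫⁻ y in triSet (pt 0 0) (pt 1 0) (pt (α * s) (α * t)), F y ∂volume) ^ ((1:ℝ)/2)
      ≤ (ENNReal.ofReal (4 / t) *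
        ((∫⁻ x in triSet (pt 0 0) (pt 1 0) (pt (α * s) (α * t)),
          ENNReal.ofReal (Z x ^ 2) ∂volume)
        + (∫⁻ x in triSet (pt 0 0) (pt 1 0) (pt (α * s) (α * t)),
          ENNReal.ofReal (Y x ^ 2) ∂volume)
        + ∫⁻ x in triSet (pt 0 0) (pt 1 0) (pt (α * s) (α * t)),
          ENNReal.ofReal (X x ^ 2) ∂volume)) ^ ((1:ℝ)/2) :=
        ENNReal.rpow_le_rpow step1 (by norm_num)
    _ = ENNReal.ofReal (Real.sqrt (4 / t)) *
        ((∫⁻ x in triSet (pt 0 0) (pt 1 0) (pt (α * s) (α * t)),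
          ENNReal.ofReal (Z x ^ 2) ∂volume)
        + (∫⁻ x in triSet (pt 0 0) (pt 1 0) (pt (α * s) (α * t)),
          ENNReal.ofReal (Y x ^ 2) ∂volume)
        + ∫⁻ x in triSet (pt 0 0) (pt 1 0) (pt (α * s) (α * t)),
          ENNReal.ofReal (X x ^ 2) ∂volume) ^ ((1:ℝ)/2) := by
        rw [ENNReal.mul_rpow_of_nonneg _ _ (by norm_num),
          ENNReal.ofReal_rpow_of_nonneg (by positivity) (by norm_num)]
        congr 2
        rw [Real.sqrt_eq_rpow]

/-! ### Circumradius bound -/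

theorem pt_app0 (a b : ℝ) : pt a b 0 = a := rfl
theorem pt_app1 (a b : ℝ) : pt a b 1 = b := rfl

theorem dist_sq_eq (x y : E2) :
    dist x y ^ 2 = (x 0 - y 0) ^ 2 + (x 1 - y 1) ^ 2 := by
  rw [EuclideanSpace.dist_eq, Real.sq_sqrt (by positivity)]
  simp [Fin.sum_univ_two, Real.dist_eq, sq_abs]

theorem circum_alg {s t α R c0 c1 : ℝ} (hst : s ^ 2 + t ^ 2 = 1) (ht : 0 < t) (hα0 : 0 < α)
    (hR0 : 0 ≤ R)
    (e1 : c0 ^ 2 + c1 ^ 2 = R ^ 2) (e2 : (c0 - 1) ^ 2 + c1 ^ 2 = R ^ 2)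
    (e3 : (c0 - α * s) ^ 2 + (c1 - α * t) ^ 2 = R ^ 2)
    (hl : 1 ≤ (1 - α * s) ^ 2 + (α * t) ^ 2) :
    1 / (2 * t) ≤ R := by
  have hc0 : c0 = 1 / 2 := by linear_combination (e1 - e2) / 2
  have h3' : α * (s + 2 * t * c1) = α * α := by
    linear_combination (e1 - e3) / 1 + α ^ 2 * hst - 2 * α * s * hc0
  have him : 2 * t * c1 = α - s := by
    have := mul_left_cancel₀ hα0.ne' h3'
    linarith
  have halg : 2 * α * s ≤ α ^ 2 := by
    have hα2 : α ^ 2 * s ^ 2 + α ^ 2 * t ^ 2 = α ^ 2 := by linear_combination α ^ 2 * hst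
    have hexp : (1 - α * s) ^ 2 + (α * t) ^ 2
        = 1 - 2 * (α * s) + (α ^ 2 * s ^ 2 + α ^ 2 * t ^ 2) := by ring
    rw [hexp, hα2] at hl
    linarith
  have hRsq : R ^ 2 = 1 / 4 + c1 ^ 2 := by
    linear_combination -e1 + (c0 + 1 / 2) * hc0
  have hsq2 : (R * (2 * t)) ^ 2 = t ^ 2 + (α - s) ^ 2 := by
    linear_combination (4 * t ^ 2) * hRsq + (2 * t * c1 + (α - s)) * him
  have htsq : 1 ≤ t ^ 2 + (α - s) ^ 2 := by
    have hexp2 : t ^ 2 + (α - s) ^ 2 = (s ^ 2 + t ^ 2) + α ^ 2 - 2 * α * s := by ring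
    rw [hexp2, hst]
    linarith
  rw [div_le_iff₀ (by positivity : (0:ℝ) < 2 * t)]
  have hx0 : 0 ≤ R * (2 * t) := mul_nonneg hR0 (by positivity)
  have hx1 : 1 ≤ (R * (2 * t)) ^ 2 := by linarith [hsq2, htsq]
  by_contra hcon
  push_neg at hcon
  have hlt : (R * (2 * t)) ^ 2 < 1 := by
    calc (R * (2 * t)) ^ 2 = (R * (2 * t)) * (R * (2 * t)) := sq (R * (2 * t)) ▸ by ring
      _ ≤ 1 * (R * (2 * t)) := mul_le_mul_of_nonneg_right hcon.le hx0
      _ < 1 := by linarith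
  linarith

theorem circum {s t α R : ℝ} (c : E2) (hst : s ^ 2 + t ^ 2 = 1) (ht : 0 < t) (hα0 : 0 < α)
    (hlong1 : dist (pt 0 0) (pt 1 0) ≤ dist (pt 1 0) (pt (α * s) (α * t)))
    (hc1 : dist c (pt 0 0) = R) (hc2 : dist c (pt 1 0) = R)
    (hc3 : dist c (pt (α * s) (α * t)) = R) :
    1 / (2 * t) ≤ R := by
  have hR0 : 0 ≤ R := by rw [← hc1]; exact dist_nonneg
  have e1 : (c 0) ^ 2 + (c 1) ^ 2 = R ^ 2 := by
    have h := congrArg (· ^ 2) hc1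
    rw [dist_sq_eq, pt_app0, pt_app1] at h
    linear_combination h
  have e2 : (c 0 - 1) ^ 2 + (c 1) ^ 2 = R ^ 2 := by
    have h := congrArg (· ^ 2) hc2
    rw [dist_sq_eq, pt_app0, pt_app1] at h
    linear_combination h
  have e3 : (c 0 - α * s) ^ 2 + (c 1 - α * t) ^ 2 = R ^ 2 := by
    have h := congrArg (· ^ 2) hc3
    rw [dist_sq_eq, pt_app0, pt_app1] at h
    linear_combination h
  have hl : 1 ≤ (1 - α * s) ^ 2 + (α * t) ^ 2 := by
    have h := pow_le_pow_left₀ dist_nonneg hlong1 2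
    rw [dist_sq_eq, dist_sq_eq] at h
    simp only [pt_app0, pt_app1] at h
    nlinarith [h]
  exact circum_alg hst ht hα0 hR0 e1 e2 e3 hl

/-! ### Constant comparison -/

theorem const_cmp {t R C : ℝ} (ht : 0 < t) (hRlow : 1 / (2 * t) ≤ R) (hC : 0 < C) :
    Real.sqrt (2 / t) * (C * Real.sqrt (4 / t)) ≤ 4 * Real.sqrt 2 * C * R := by
  have h8 : Real.sqrt (2 / t) * Real.sqrt (4 / t) = 2 * Real.sqrt 2 / t := by
    rw [← Real.sqrt_mul (by positivity)]
    rw [show (2 / t) * (4 / t) = (2 * Real.sqrt 2 / t) ^ 2 by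
      rw [div_pow, mul_pow]
      rw [Real.sq_sqrt (by norm_num : (0:ℝ) ≤ 2)]
      field_simp
      ring]
    exact Real.sqrt_sq (by positivity)
  have hts : 2 * Real.sqrt 2 / t ≤ 4 * Real.sqrt 2 * R := by
    rw [div_le_iff₀ ht]
    have h1 : 1 ≤ R * (2 * t) := by
      rw [div_le_iff₀ (by positivity)] at hRlow
      linarith
    nlinarith [Real.sqrt_nonneg 2]
  calc Real.sqrt (2 / t) * (C * Real.sqrt (4 / t))
      = (Real.sqrt (2 / t) * Real.sqrt (4 / t)) * C := by ring
    _ = (2 * Real.sqrt 2 / t) * C := by rw [h8]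
    _ ≤ (4 * Real.sqrt 2 * R) * C := mul_le_mul_of_nonneg_right hts hC.le
    _ = 4 * Real.sqrt 2 * C * R := by ring

end AltProof
end AuxProof

/-- Corollary 3.3 / `alternateproof`.  Let `K` be the triangle
with vertices `(0,0)`, `(1,0)`, `(αs, αt)` (`s² + t² = 1`, `t > 0`, `0 < α ≤ 1`,
the edge joining `(1,0)` and `(αs,αt)` being the longest), let `R_K` be its
circumradius (characterized by a circumcenter `c`), and let `C₁₂` be any constant
with `B_2^{1,1}(K_β) ≤ C₁₂` for every right triangle `K_β` with vertices
`(0,0)`, `(1,0)`, `(0,β)`, `0 < β ≤ 1`.  Then `B_2^{1,1}(K) ≤ 4√2 · C₁₂ · R_K`. -/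
theorem Bconst_le_circumradius_p_two
    (s t α : ℝ) (hst : s ^ 2 + t ^ 2 = 1) (ht : 0 < t) (hα0 : 0 < α) (hα1 : α ≤ 1)
    (hlong1 : dist (pt 0 0) (pt 1 0) ≤ dist (pt 1 0) (pt (α * s) (α * t)))
    (hlong2 : dist (pt 0 0) (pt (α * s) (α * t)) ≤ dist (pt 1 0) (pt (α * s) (α * t)))
    (R : ℝ) (c : E2)
    (hc1 : dist c (pt 0 0) = R) (hc2 : dist c (pt 1 0) = R)
    (hc3 : dist c (pt (α * s) (α * t)) = R)
    (C : ℝ)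
    (hC : ∀ β : ℝ, 0 < β → β ≤ 1 →
      Bconst 1 1 2 (pt 0 0) (pt 1 0) (pt 0 β) ≤ ENNReal.ofReal C) :
    Bconst 1 1 2 (pt 0 0) (pt 1 0) (pt (α * s) (α * t)) ≤
      ENNReal.ofReal (4 * Real.sqrt 2 * C * R) := by
  classical
  have hRlow : 1 / (2 * t) ≤ R := AltProof.circum c hst ht hα0 hlong1 hc1 hc2 hc3
  unfold Bconst
  apply iSup_le
  rintro ⟨v, ⟨hvsm, hvW2⟩, hvz⟩
  simp only
  have hv2 : ContDiff ℝ 2 v := hvsm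
  have hwC : ContDiff ℝ 2 (fun x => v (AltProof.shear s t x)) :=
    hv2.comp (AltProof.shear s t).contDiff
  have hwW : MemW 2 2 (triSet (pt 0 0) (pt 1 0) (pt 0 α)) (fun x => v (AltProof.shear s t x)) :=
    AltProof.memW_of_contDiff hwC _ _ _
  have hwz : ∀ x ∈ lagrangeNodes 1 (pt 0 0) (pt 1 0) (pt 0 α),
      (fun x => v (AltProof.shear s t x)) x = 0 := by
    intro x hx
    rw [AltProof.lagrangeNodes_one] at hx
    have hmem : ∀ y ∈ ({pt 0 0, pt 1 0, pt (α*s) (α*t)} : Set E2), v y = 0 := by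
      intro y hy
      exact hvz y (by rw [AltProof.lagrangeNodes_one]; exact hy)
    rcases hx with rfl | rfl | rfl
    · simp only
      rw [AltProof.shear_v1]
      exact hmem _ (Or.inl rfl)
    · simp only
      rw [AltProof.shear_v2]
      exact hmem _ (Or.inr (Or.inl rfl))
    · simp only
      rw [AltProof.shear_v3]
      exact hmem _ (Or.inr (Or.inr rfl))
  set Nv := sobSemi 1 2 (triSet (pt 0 0) (pt 1 0) (pt (α * s) (α * t))) v with hNv
  set Dv := sobSemi 2 2 (triSet (pt 0 0) (pt 1 0) (pt (α * s) (α * t))) v with hDv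
  set Nw := sobSemi 1 2 (triSet (pt 0 0) (pt 1 0) (pt 0 α))
    (fun x => v (AltProof.shear s t x)) with hNw
  set Dw := sobSemi 2 2 (triSet (pt 0 0) (pt 1 0) (pt 0 α))
    (fun x => v (AltProof.shear s t x)) with hDw
  have hBα : Bconst 1 1 2 (pt 0 0) (pt 1 0) (pt 0 α) ≤ ENNReal.ofReal C := hC α hα0 hα1
  have hratio : Nw / Dw ≤ ENNReal.ofReal C := by
    refine le_trans ?_ hBα
    unfold Bconst
    exact le_iSup (fun u : {u : E2 → ℝ // MemW (1 + 1) 2 (triSet (pt 0 0) (pt 1 0) (pt 0 α)) u ∧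
        ∀ x ∈ lagrangeNodes 1 (pt 0 0) (pt 1 0) (pt 0 α), u x = 0} =>
      sobSemi 1 2 (triSet (pt 0 0) (pt 1 0) (pt 0 α)) (u : E2 → ℝ) /
        sobSemi (1 + 1) 2 (triSet (pt 0 0) (pt 1 0) (pt 0 α)) (u : E2 → ℝ))
      ⟨fun x => v (AltProof.shear s t x), hwW, hwz⟩
  have h1 : Nv ≤ ENNReal.ofReal (Real.sqrt (2 / t)) * Nw := AltProof.comp1 hst ht hv2
  have h2 : Dw ≤ ENNReal.ofReal (Real.sqrt (4 / t)) * Dv := AltProof.comp2 hst ht hv2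
  have hDwtop : Dw ≠ ∞ := hwW.2 2 le_rfl
  have hDvtop : Dv ≠ ∞ := hvW2 2 le_rfl
  by_cases hDw0 : Dw = 0
  · have hNw0 : Nw = 0 := by
      by_contra hNw0
      rw [hDw0, ENNReal.div_zero hNw0] at hratio
      exact ENNReal.ofReal_ne_top (top_le_iff.mp hratio)
    have hNv0 : Nv = 0 := by
      rw [hNw0, mul_zero] at h1
      exact le_antisymm h1 zero_le
    rw [hNv0, ENNReal.zero_div]
    exact zero_le
  · have hNwle : Nw ≤ ENNReal.ofReal C * Dw := (ENNReal.div_le_iff hDw0 hDwtop).mp hratio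
    have hDv0 : Dv ≠ 0 := by
      intro h0
      apply hDw0
      rw [h0, mul_zero] at h2
      exact le_antisymm h2 zero_le
    have chain : Nv ≤ (ENNReal.ofReal (Real.sqrt (2 / t)) *
        (ENNReal.ofReal C * ENNReal.ofReal (Real.sqrt (4 / t)))) * Dv := by
      calc Nv ≤ ENNReal.ofReal (Real.sqrt (2 / t)) * Nw := h1
        _ ≤ ENNReal.ofReal (Real.sqrt (2 / t)) * (ENNReal.ofReal C * Dw) :=
            mul_le_mul_right hNwle _
        _ ≤ ENNReal.ofReal (Real.sqrt (2 / t)) *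
            (ENNReal.ofReal C * (ENNReal.ofReal (Real.sqrt (4 / t)) * Dv)) :=
            mul_le_mul_right (mul_le_mul_right h2 _) _
        _ = (ENNReal.ofReal (Real.sqrt (2 / t)) *
            (ENNReal.ofReal C * ENNReal.ofReal (Real.sqrt (4 / t)))) * Dv := by ring
    have hfin : Nv / Dv ≤ ENNReal.ofReal (Real.sqrt (2 / t)) *
        (ENNReal.ofReal C * ENNReal.ofReal (Real.sqrt (4 / t))) :=
      (ENNReal.div_le_iff hDv0 hDvtop).mpr chain
    refine le_trans hfin ?_
    by_cases hCneg : C ≤ 0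
    · rw [ENNReal.ofReal_eq_zero.mpr hCneg, zero_mul, mul_zero]
      exact zero_le
    · push_neg at hCneg
      rw [← ENNReal.ofReal_mul (by positivity), ← ENNReal.ofReal_mul (by positivity)]
      exact ENNReal.ofReal_le_ofReal (AltProof.const_cmp ht hRlow hCneg)
end
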